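/- Let φ, ψ : ℝ → ℝ with ψ(x) = ∑_{k∈ℤ} g(k) √2 φ(2x − k), where g has finitely many nonzero terms, and suppose the integer translates {φ(· − n)}_{n∈ℤ} form an orthonormal system in L²(ℝ) and g(k) = (−1)^k h(1−k) for a finite real quadrature mirror filter h satisfying ∑_k h(k)h(k−2m) = δ_{0,m}. Then the translates {ψ(· − n)}_{n∈ℤ} form an orthonormal system in L²(ℝ). -/

import Mathlib

open MeasureTheory

/-- Orthonormal wavelet construction: if the integer translates of the scaling
function `φ` are orthonormal in `L²(ℝ)`, `h` is a finite quadrature mirror filter,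
`g(k) = (−1)^k h(1−k)`, and `ψ(x) = ∑_k g(k) √2 φ(2x − k)`, then the integer
translates of `ψ` are orthonormal in `L²(ℝ)`. -/
theorem wavelet_translates_orthonormal
    (φ ψ : ℝ → ℝ) (h g : ℤ → ℝ)
    (hfin : (Function.support h).Finite)
    (hφmem : MemLp φ 2 (volume : Measure ℝ))
    (hφorth : ∀ m n : ℤ, (∫ x : ℝ, φ (x - m) * φ (x - n))
        = if m = n then 1 else 0)
    (hQMF : ∀ m : ℤ, (∑ᶠ k : ℤ, h k * h (k - 2 * m)) = if m = 0 then 1 else 0)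
    (hg : ∀ k : ℤ, g k = (-1:ℝ) ^ k * h (1 - k))
    (hψ : ∀ x : ℝ, ψ x = ∑ᶠ k : ℤ, g k * (Real.sqrt 2 * φ (2 * x - k))) :
    ∀ m n : ℤ, (∫ x : ℝ, ψ (x - m) * ψ (x - n)) = if m = n then 1 else 0 := by
  classical
  -- finite support of g
  have hgfin : (Function.support g).Finite := by
    apply Set.Finite.subset (hfin.image (fun k => 1 - k))
    intro k hk
    rw [Function.mem_support] at hk
    rw [hg k] at hk
    refine ⟨1 - k, ?_, by ring⟩
    intro h0
    exact hk (by rw [h0, mul_zero])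
  set T : Finset ℤ := hgfin.toFinset with hT
  have hg0 : ∀ k ∉ T, g k = 0 := by
    intro k hk
    by_contra h0
    exact hk (hgfin.mem_toFinset.2 h0)
  have hgT : Function.support g ⊆ ↑T := fun k hk => hgfin.mem_toFinset.2 hk
  -- the filter identity for g
  have hGQMF : ∀ d : ℤ, (∑ᶠ k : ℤ, g k * g (k + 2 * d)) = if d = 0 then 1 else 0 := by
    intro d
    have key : ∀ j : ℤ, g (1 - j) * g (1 - j + 2 * d) = h j * h (j - 2 * d) := by
      intro j
      rw [hg, hg]
      have h1 : (1:ℤ) - (1 - j) = j := by ring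
      have h2 : (1:ℤ) - (1 - j + 2 * d) = j - 2 * d := by ring
      rw [h1, h2, mul_mul_mul_comm,
        ← zpow_add₀ (by norm_num : (-1:ℝ) ≠ 0),
        Even.neg_one_zpow ⟨1 - j + d, by ring⟩, one_mul]
    calc (∑ᶠ k : ℤ, g k * g (k + 2 * d))
        = ∑ᶠ j : ℤ, g ((Equiv.subLeft 1) j) * g ((Equiv.subLeft 1) j + 2 * d) :=
          (finsum_comp_equiv (Equiv.subLeft 1)).symm
      _ = ∑ᶠ j : ℤ, h j * h (j - 2 * d) := by
          apply finsum_congr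
          intro j
          simpa using key j
      _ = if d = 0 then 1 else 0 := hQMF d
  -- integrability
  have hint : ∀ a b : ℝ, Integrable (fun y : ℝ => φ (y - a) * φ (y - b)) volume := by
    intro a b
    have hmem : ∀ c : ℝ, MemLp (fun y : ℝ => φ (y - c)) 2 (volume : Measure ℝ) :=
      fun c => hφmem.comp_measurePreserving (measurePreserving_sub_right volume c)
    have := (hmem b).smul (hmem a) (p := 2) (q := 2) (r := 1)
      (hpqr := ⟨by rw [inv_one, ENNReal.inv_two_add_inv_two]⟩)
    rw [← memLp_one_iff_integrable]
    simpa [smul_eq_mul, Pi.mul_def] using this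
  have hint2 : ∀ a b : ℝ, Integrable (fun x : ℝ => φ (2 * x - a) * φ (2 * x - b)) volume :=
    fun a b => (hint a b).comp_mul_left' two_ne_zero
  -- scaled orthogonality
  have hI : ∀ a b : ℤ, (∫ x : ℝ, φ (2 * x - (a:ℝ)) * φ (2 * x - (b:ℝ)))
      = (1/2) * (if a = b then 1 else 0) := by
    intro a b
    have := Measure.integral_comp_mul_left (fun y : ℝ => φ (y - a) * φ (y - b)) 2
    rw [show (fun x : ℝ => φ (2 * x - (a:ℝ)) * φ (2 * x - (b:ℝ)))
        = fun x : ℝ => (fun y : ℝ => φ (y - a) * φ (y - b)) (2 * x) from rfl] at *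
    rw [this, hφorth a b]
    rw [smul_eq_mul]
    split_ifs <;> norm_num
  intro m n
  -- pointwise expansion of translates of ψ
  have hψm : ∀ (c : ℤ) (x : ℝ),
      ψ (x - c) = ∑ k ∈ T, g k * (Real.sqrt 2 * φ (2 * x - (2 * (c:ℝ) + k))) := by
    intro c x
    rw [hψ (x - c)]
    rw [finsum_eq_finset_sum_of_support_subset _
      (by
        intro k hk
        apply hgT
        rw [Function.mem_support] at hk ⊢
        intro h0
        exact hk (by rw [h0, zero_mul]))]
    apply Finset.sum_congr rfl
    intro k _
    have : 2 * (x - (c:ℝ)) - k = 2 * x - (2 * (c:ℝ) + k) := by ring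
    rw [this]
  have h2 : Real.sqrt 2 * Real.sqrt 2 = 2 := Real.mul_self_sqrt (by norm_num)
  have hprod : ∀ x : ℝ, ψ (x - m) * ψ (x - n)
      = ∑ p ∈ T ×ˢ T, (g p.1 * g p.2) *
          (2 * (φ (2 * x - (2 * (m:ℝ) + p.1)) * φ (2 * x - (2 * (n:ℝ) + p.2)))) := by
    intro x
    rw [hψm m x, hψm n x, Finset.sum_mul_sum, ← Finset.sum_product']
    apply Finset.sum_congr rfl
    rintro ⟨k, l⟩ -
    calc (g k * (Real.sqrt 2 * φ (2 * x - (2 * (m:ℝ) + k)))) *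
          (g l * (Real.sqrt 2 * φ (2 * x - (2 * (n:ℝ) + l))))
        = (g k * g l) * ((Real.sqrt 2 * Real.sqrt 2) *
            (φ (2 * x - (2 * (m:ℝ) + k)) * φ (2 * x - (2 * (n:ℝ) + l)))) := by ring
      _ = _ := by rw [h2]
  -- compute the integral
  have hstep : (∫ x : ℝ, ψ (x - m) * ψ (x - n))
      = ∑ p ∈ T ×ˢ T, (g p.1 * g p.2) * (if 2*m + p.1 = 2*n + p.2 then 1 else 0) := by
    rw [integral_congr_ae (Filter.Eventually.of_forall hprod)]
    rw [integral_finset_sum]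
    · apply Finset.sum_congr rfl
      rintro ⟨k, l⟩ -
      rw [integral_const_mul, integral_const_mul]
      have := hI (2*m + k) (2*n + l)
      push_cast at this
      rw [this]
      show g k * g l * (2 * (1/2 * if 2*m + k = 2*n + l then (1:ℝ) else 0))
          = g k * g l * if 2*m + k = 2*n + l then 1 else 0
      split_ifs <;> ring
    · rintro ⟨k, l⟩ -
      exact (((hint2 _ _).const_mul 2).const_mul _)
  rw [hstep]
  -- collapse the double sum
  have hcollapse : (∑ p ∈ T ×ˢ T, (g p.1 * g p.2) *
        (if 2*m + p.1 = 2*n + p.2 then 1 else 0))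
      = ∑ k ∈ T, g k * g (k + 2 * (m - n)) := by
    rw [Finset.sum_product]
    apply Finset.sum_congr rfl
    intro k _
    have : ∀ l ∈ T, (g k * g l) * (if 2*m + k = 2*n + l then 1 else 0)
        = if l = k + 2 * (m - n) then g k * g l else 0 := by
      intro l _
      by_cases hc : 2*m + k = 2*n + l
      · rw [if_pos hc, if_pos (by omega), mul_one]
      · rw [if_neg hc, if_neg (by omega), mul_zero]
    rw [Finset.sum_congr rfl this, Finset.sum_ite_eq' T (k + 2*(m-n)) (fun l => g k * g l)]
    split_ifs with hmem
    · rfl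
    · rw [hg0 _ hmem, mul_zero]
  rw [hcollapse]
  have : (∑ k ∈ T, g k * g (k + 2 * (m - n))) = ∑ᶠ k : ℤ, g k * g (k + 2 * (m - n)) := by
    rw [finsum_eq_finset_sum_of_support_subset]
    intro k hk
    apply hgT
    rw [Function.mem_support] at hk ⊢
    intro h0
    exact hk (by rw [h0, zero_mul])
  rw [this, hGQMF (m - n)]
  simp [sub_eq_zero]
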